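/- Assume Assumption (F). Let c ∈ [0, 2√(dF(0,0))), let e ∈ S^{N−1}, and let p : ℝ^N → ℝ be a C² function with 0 < p(x) ≤ 1 for all x ∈ ℝ^N satisfying dΔp(x) + c ∇p(x)·e + p(x) F(p(x), 0) = 0 for all x ∈ ℝ^N. Then p(x) = 1 for all x ∈ ℝ^N. (Lemma 4.4, bounded positive stationary solutions of the monostable equation with drift.) -/

import Mathlib

open Filter Set
open Topology

noncomputable section

abbrev E (N : ℕ) : Type := EuclideanSpace ℝ (Fin N)

/-- The Laplacian in the space variable, as the sum of second derivatives in the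
coordinate directions. -/
noncomputable def lap {N : ℕ} (f : E N → ℝ) (x : E N) : ℝ :=
  ∑ i : Fin N,
    fderiv ℝ (fun y : E N => fderiv ℝ f y (EuclideanSpace.single i (1 : ℝ))) x
      (EuclideanSpace.single i (1 : ℝ))

/-- Assumption (F). -/
structure AssumpF (F : ℝ → ℝ → ℝ) : Prop where
  smooth : ContDiffOn ℝ 1 (Function.uncurry F) (Set.Ici (0 : ℝ) ×ˢ Set.Ici (0 : ℝ))
  strictAnti : ∀ u : ℝ, 0 < u → StrictAntiOn (F u) (Set.Ici (0 : ℝ))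
  one_zero : F 1 0 = 0
  pos : ∀ u : ℝ, 0 ≤ u → u < 1 → 0 < F u 0
  kpp : ∀ u : ℝ, 0 ≤ u → F u 0 ≤ F 0 0

lemma abs_coord_le_norm {N : ℕ} (x : E N) (i : Fin N) : |x i| ≤ ‖x‖ := by
  rw [EuclideanSpace.norm_eq]
  have h1 : |x i| = Real.sqrt (‖x i‖ ^ 2) := by
    rw [Real.sqrt_sq_eq_abs]; simp
  rw [h1]
  apply Real.sqrt_le_sqrt
  exact Finset.single_le_sum (f := fun k => ‖x k‖ ^ 2) (fun k _ => by positivity) (Finset.mem_univ i)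

/-- 1D second-order conditions at a local minimum. -/
lemma oneD_min (q q1 : ℝ → ℝ) (a : ℝ) (hq : ∀ t, HasDerivAt q (q1 t) t)
    (hq1 : HasDerivAt q1 a 0) (hmin : IsLocalMin q 0) : q1 0 = 0 ∧ 0 ≤ a := by
  have h0 : q1 0 = 0 := hmin.hasDerivAt_eq_zero (hq 0)
  refine ⟨h0, ?_⟩
  by_contra hneg
  push_neg at hneg
  -- slope of q1 tends to a < 0
  have hslope : Tendsto (fun t => q1 t / t) (𝓝[≠] 0) (𝓝 a) := by
    have := hasDerivAt_iff_tendsto_slope.1 hq1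
    have h2 : (fun t => q1 t / t) = slope q1 0 := by
      funext t; rw [slope_def_field]; rw [h0]; ring_nf
    rw [h2]; exact this
  have hev : ∀ᶠ t in 𝓝[≠] (0:ℝ), q1 t / t < a / 2 := by
    have : Iio (a/2) ∈ 𝓝 a := Iio_mem_nhds (by linarith)
    exact hslope.eventually_mem this
  rw [eventually_nhdsWithin_iff] at hev
  rcases Metric.eventually_nhds_iff.1 hev with ⟨δ, hδ, hδ'⟩
  -- also local min ball
  rcases Metric.eventually_nhds_iff.1 hmin with ⟨δ₂, hδ₂, hδ₂'⟩
  set r := min δ δ₂ / 2 with hr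
  have hrpos : 0 < r := by positivity
  have hq1neg : ∀ t ∈ Ioo (0:ℝ) r, q1 t < 0 := by
    intro t ht
    have h1 : q1 t / t < a / 2 := by
      apply hδ' (y := t)
      · rw [Real.dist_eq, show t - 0 = t by ring, abs_of_pos ht.1]
        have : r ≤ δ := by rw [hr]; have := min_le_left δ δ₂; linarith
        linarith [ht.2]
      · exact ne_of_gt ht.1
    have : q1 t < (a/2) * t := by
      have := (div_lt_iff₀ ht.1).1 h1
      linarith
    nlinarith [ht.1]
  have hanti : StrictAntiOn q (Icc 0 r) := by
    apply strictAntiOn_of_deriv_neg (convex_Icc _ _)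
    · exact fun t _ => (hq t).differentiableAt.continuousAt.continuousWithinAt
    · intro t ht
      rw [interior_Icc] at ht
      rw [(hq t).deriv]
      exact hq1neg t ⟨ht.1, ht.2⟩
  have hlt : q (r/2) < q 0 := by
    apply hanti ⟨le_rfl, le_of_lt hrpos⟩ ⟨by linarith, by linarith⟩ (by linarith)
  have hge : q 0 ≤ q (r/2) := by
    apply hδ₂'
    rw [Real.dist_eq, show r/2 - 0 = r/2 by ring, abs_of_pos (by linarith : (0:ℝ) < r/2)]
    have : r ≤ δ₂ := by rw [hr]; have := min_le_right δ δ₂; linarith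
    linarith
  linarith

/-- 1D building block. -/
def fexp (a w t : ℝ) : ℝ := Real.exp (a * t) * Real.cos (w * t)

def fexp1 (a w t : ℝ) : ℝ :=
  a * (Real.exp (a * t) * Real.cos (w * t)) - w * (Real.exp (a * t) * Real.sin (w * t))

def fexp2 (a w t : ℝ) : ℝ :=
  (a ^ 2 - w ^ 2) * (Real.exp (a * t) * Real.cos (w * t))
    - 2 * a * w * (Real.exp (a * t) * Real.sin (w * t))

lemma hasDerivAt_fexp (a w t : ℝ) : HasDerivAt (fexp a w) (fexp1 a w t) t := by
  have h1 : HasDerivAt (fun t : ℝ => Real.exp (a * t)) (a * Real.exp (a * t)) t := by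
    simpa [mul_comm, Function.comp_def] using (Real.hasDerivAt_exp (a * t)).comp t ((hasDerivAt_id t).const_mul a)
  have h2 : HasDerivAt (fun t : ℝ => Real.cos (w * t)) (-(w * Real.sin (w * t))) t := by
    have := (Real.hasDerivAt_cos (w * t)).comp t ((hasDerivAt_id t).const_mul w)
    simpa [mul_comm, Function.comp_def] using this
  have := h1.mul h2
  refine this.congr_deriv ?_
  unfold fexp1; ring

lemma hasDerivAt_fexp1 (a w t : ℝ) : HasDerivAt (fexp1 a w) (fexp2 a w t) t := by
  have h1 : HasDerivAt (fun t : ℝ => Real.exp (a * t)) (a * Real.exp (a * t)) t := by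
    simpa [mul_comm, Function.comp_def] using (Real.hasDerivAt_exp (a * t)).comp t ((hasDerivAt_id t).const_mul a)
  have h2 : HasDerivAt (fun t : ℝ => Real.cos (w * t)) (-(w * Real.sin (w * t))) t := by
    have := (Real.hasDerivAt_cos (w * t)).comp t ((hasDerivAt_id t).const_mul w)
    simpa [mul_comm, Function.comp_def] using this
  have h3 : HasDerivAt (fun t : ℝ => Real.sin (w * t)) (w * Real.cos (w * t)) t := by
    have := (Real.hasDerivAt_sin (w * t)).comp t ((hasDerivAt_id t).const_mul w)
    simpa [mul_comm, Function.comp_def] using this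
  have := ((h1.mul h2).const_mul a).sub ((h1.mul h3).const_mul w)
  refine this.congr_deriv ?_
  unfold fexp2; ring

lemma fexp_pos_interior (a w t : ℝ) (hw : 0 < w) (ht : |t| < Real.pi / (2 * w)) :
    0 < fexp a w t := by
  unfold fexp
  apply mul_pos (Real.exp_pos _)
  apply Real.cos_pos_of_mem_Ioo
  constructor
  · have := abs_lt.1 ht
    have : -(Real.pi / (2 * w)) < t := this.1
    calc -(Real.pi / 2) = (-(Real.pi / (2*w))) * w := by field_simp
    _ < t * w := by apply mul_lt_mul_of_pos_right this hw
    _ = w * t := by ring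
  · have := (abs_lt.1 ht).2
    calc w * t = t * w := by ring
    _ < (Real.pi / (2*w)) * w := mul_lt_mul_of_pos_right this hw
    _ = Real.pi / 2 := by field_simp

lemma fexp_nonneg (a w t : ℝ) (hw : 0 < w) (ht : |t| ≤ Real.pi / (2 * w)) :
    0 ≤ fexp a w t := by
  unfold fexp
  apply mul_nonneg (le_of_lt (Real.exp_pos _))
  apply Real.cos_nonneg_of_mem_Icc
  have := abs_le.1 ht
  constructor
  · calc -(Real.pi / 2) = (-(Real.pi / (2*w))) * w := by field_simp
    _ ≤ t * w := mul_le_mul_of_nonneg_right (by linarith [this.1]) (le_of_lt hw)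
    _ = w * t := by ring
  · calc w * t = t * w := by ring
    _ ≤ (Real.pi / (2*w)) * w := mul_le_mul_of_nonneg_right this.2 (le_of_lt hw)
    _ = Real.pi / 2 := by field_simp

lemma fexp_le (a w t : ℝ) (hw : 0 < w) (ht : |t| ≤ Real.pi / (2 * w)) (B : ℝ)
    (hB : |a| * (Real.pi / (2*w)) ≤ B) : fexp a w t ≤ Real.exp B := by
  unfold fexp
  calc Real.exp (a*t) * Real.cos (w*t) ≤ Real.exp (a*t) * 1 := by
        apply mul_le_mul_of_nonneg_left (Real.cos_le_one _) (le_of_lt (Real.exp_pos _))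
  _ = Real.exp (a*t) := by ring
  _ ≤ Real.exp B := by
        apply Real.exp_le_exp.2
        calc a * t ≤ |a * t| := le_abs_self _
        _ = |a| * |t| := abs_mul _ _
        _ ≤ |a| * (Real.pi / (2*w)) := mul_le_mul_of_nonneg_left ht (abs_nonneg _)
        _ ≤ B := hB

/-- derivative of the product along a general line -/
lemma prod_line {N : ℕ} (a : Fin N → ℝ) (w : ℝ) (z v : E N) (t : ℝ) :
    HasDerivAt (fun s : ℝ => ∏ i, fexp (a i) w (z i + s * v i))
      (∑ i, (∏ k ∈ Finset.univ.erase i, fexp (a k) w (z k + t * v k)) *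
        (v i * fexp1 (a i) w (z i + t * v i))) t := by
  have h : ∀ i ∈ Finset.univ (α := Fin N),
      HasDerivAt (fun s : ℝ => fexp (a i) w (z i + s * v i))
        (v i * fexp1 (a i) w (z i + t * v i)) t := by
    intro i _
    have hline : HasDerivAt (fun s : ℝ => z i + s * v i) (v i) t := by
      simpa using ((hasDerivAt_id t).mul_const (v i)).const_add (z i)
    have := (hasDerivAt_fexp (a i) w (z i + t * v i)).comp t hline
    simpa [mul_comm, Function.comp_def] using this
  have := HasDerivAt.finset_prod h
  simpa [smul_eq_mul, Finset.prod_fn] using this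

/-- coordinate formula -/
lemma line_coord {N : ℕ} (z v : E N) (t : ℝ) (k : Fin N) :
    (z + t • v) k = z k + t * v k := rfl

lemma single_coord {N : ℕ} (i k : Fin N) :
    (EuclideanSpace.single i (1:ℝ)) k = if k = i then 1 else 0 := by
  simp [EuclideanSpace.single_apply]

/-- p-side: derivative along a line -/
lemma p_line {N : ℕ} (p : E N → ℝ) (hp : Differentiable ℝ p) (x v : E N) (t : ℝ) :
    HasDerivAt (fun s : ℝ => p (x + s • v)) (fderiv ℝ p (x + t • v) v) t := by
  have hline : HasDerivAt (fun s : ℝ => x + s • v) v t := by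
    simpa using ((hasDerivAt_id t).smul_const v).const_add x
  exact (hp.differentiableAt.hasFDerivAt).comp_hasDerivAt t hline

/-- p-side: second derivative along a line, at t = 0 -/
lemma p_line2 {N : ℕ} (p : E N → ℝ) (hp : ContDiff ℝ 2 p) (x v : E N) :
    HasDerivAt (fun s : ℝ => fderiv ℝ p (x + s • v) v)
      (fderiv ℝ (fun y => fderiv ℝ p y v) x v) 0 := by
  have hK : DifferentiableAt ℝ (fun y => fderiv ℝ p y v) x := by
    have h1 : ContDiff ℝ 1 (fderiv ℝ p) := hp.fderiv_right (by norm_num)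
    have h2 : Differentiable ℝ (fun y => fderiv ℝ p y v) := by
      have := (ContinuousLinearMap.apply ℝ ℝ v).differentiable.comp (h1.differentiable (by norm_num))
      exact this
    exact h2.differentiableAt
  have hline : HasDerivAt (fun s : ℝ => x + s • v) v (0:ℝ) := by
    simpa using ((hasDerivAt_id (0:ℝ)).smul_const v).const_add x
  have hK' : HasFDerivAt (fun y => fderiv ℝ p y v)
      (fderiv ℝ (fun y => fderiv ℝ p y v) x) (x + (0:ℝ) • v) := by
    simpa using hK.hasFDerivAt
  have := hK'.comp_hasDerivAt (0:ℝ) hline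
  simpa [Function.comp_def] using this

lemma key_identity (d c ei w t : ℝ) (hd : 0 < d) :
    d * fexp2 (-(c/(2*d)) * ei) w t + c * ei * fexp1 (-(c/(2*d)) * ei) w t
      = -((c^2/(4*d)) * ei^2 + d * w^2) * fexp (-(c/(2*d)) * ei) w t := by
  unfold fexp fexp1 fexp2
  have hd' : d ≠ 0 := ne_of_gt hd
  field_simp
  ring

lemma prod_single_eq {N : ℕ} (a : Fin N → ℝ) (w : ℝ) (z : E N) (i : Fin N) (s : ℝ) :
    (∏ k, fexp (a k) w ((z + s • EuclideanSpace.single i (1:ℝ)) k))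
      = fexp (a i) w (z i + s) * ∏ k ∈ Finset.univ.erase i, fexp (a k) w (z k) := by
  rw [← Finset.mul_prod_erase Finset.univ
    (fun k => fexp (a k) w ((z + s • EuclideanSpace.single i (1:ℝ)) k)) (Finset.mem_univ i)]
  congr 1
  · rw [line_coord]; simp [single_coord]
  · apply Finset.prod_congr rfl
    intro k hk
    rw [line_coord]
    simp [single_coord, (Finset.mem_erase.1 hk).1]

lemma shift_deriv1 (a w zi C t : ℝ) :
    HasDerivAt (fun s : ℝ => fexp a w (zi + s) * C) (fexp1 a w (zi + t) * C) t := by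
  have hline : HasDerivAt (fun s : ℝ => zi + s) 1 t := by
    simpa using (hasDerivAt_id t).const_add zi
  have := ((hasDerivAt_fexp a w (zi + t)).comp t hline).mul_const C
  simpa using this

lemma shift_deriv2 (a w zi C t : ℝ) :
    HasDerivAt (fun s : ℝ => fexp1 a w (zi + s) * C) (fexp2 a w (zi + t) * C) t := by
  have hline : HasDerivAt (fun s : ℝ => zi + s) 1 t := by
    simpa using (hasDerivAt_id t).const_add zi
  have := ((hasDerivAt_fexp1 a w (zi + t)).comp t hline).mul_const C
  simpa using this

lemma cont_fexp (a w : ℝ) : Continuous (fexp a w) := by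
  unfold fexp
  exact (Real.continuous_exp.comp (continuous_const.mul continuous_id)).mul
    (Real.continuous_cos.comp (continuous_const.mul continuous_id))

lemma cont_phi {N : ℕ} (a : Fin N → ℝ) (w : ℝ) :
    Continuous (fun x : E N => ∏ i, fexp (a i) w (x i)) := by
  apply continuous_finset_prod
  intro i _
  exact (cont_fexp (a i) w).comp ((EuclideanSpace.proj (𝕜 := ℝ) i).continuous)

lemma box_compact {N : ℕ} (x₀ : E N) (b : ℝ) (hb : 0 ≤ b) :
    IsCompact {x : E N | ∀ i, |x i - x₀ i| ≤ b} := by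
  apply Metric.isCompact_of_isClosed_isBounded
  · have : {x : E N | ∀ i, |x i - x₀ i| ≤ b} = ⋂ i, {x : E N | |x i - x₀ i| ≤ b} := by
      ext x; simp [Set.mem_iInter]
    rw [this]
    apply isClosed_iInter
    intro i
    apply isClosed_le
    · exact (((EuclideanSpace.proj (𝕜 := ℝ) i).continuous).sub continuous_const).abs
    · exact continuous_const
  · apply Bornology.IsBounded.subset
      (Metric.isBounded_closedBall (x := x₀) (r := Real.sqrt (N * b^2)))
    intro x hx
    simp only [Metric.mem_closedBall]
    rw [dist_eq_norm, EuclideanSpace.norm_eq]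
    apply Real.sqrt_le_sqrt
    have : ∀ i, ‖(x - x₀) i‖^2 ≤ b^2 := by
      intro i
      have h1 : |x i - x₀ i| ≤ b := hx i
      have : ‖(x - x₀) i‖ = |x i - x₀ i| := by
        congr 1
      rw [this]
      nlinarith [abs_nonneg (x i - x₀ i)]
    calc ∑ i, ‖(x - x₀) i‖^2 ≤ ∑ _i : Fin N, b^2 := Finset.sum_le_sum (fun i _ => this i)
    _ = N * b^2 := by simp [mul_comm]

set_option maxHeartbeats 2000000 in
theorem stationary_monostable_drift
    (N : ℕ) (hN : 1 ≤ N) (d : ℝ) (hd : 0 < d)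
    (F : ℝ → ℝ → ℝ) (hF : AssumpF F)
    (c : ℝ) (hc0 : 0 ≤ c) (hc : c < 2 * Real.sqrt (d * F 0 0))
    (e : E N) (he : ‖e‖ = 1)
    (p : E N → ℝ) (hp : ContDiff ℝ 2 p)
    (hpos : ∀ x : E N, 0 < p x) (hle : ∀ x : E N, p x ≤ 1)
    (heq : ∀ x : E N, d * lap p x + c * fderiv ℝ p x e + p x * F (p x) 0 = 0) :
    ∀ x : E N, p x = 1 := by
  intro x₁
  by_contra hx1
  have hNE : Nonempty (Fin N) := ⟨⟨0, by omega⟩⟩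
  have hm1 : p x₁ < 1 := lt_of_le_of_ne (hle x₁) hx1
  have hdiffp : Differentiable ℝ p := hp.differentiable (by norm_num)
  -- infimum
  set m := sInf (Set.range p) with hmdef
  have hbdd : BddBelow (Set.range p) := ⟨0, by rintro y ⟨x, rfl⟩; exact (hpos x).le⟩
  have hmle : ∀ x, m ≤ p x := fun x => csInf_le hbdd ⟨x, rfl⟩
  have hm0 : 0 ≤ m := le_csInf ⟨p x₁, x₁, rfl⟩ (by rintro y ⟨x, rfl⟩; exact (hpos x).le)
  have hmlt1 : m < 1 := lt_of_le_of_lt (hmle x₁) hm1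
  have hNpos : (0:ℝ) < N := by exact_mod_cast Nat.lt_of_lt_of_le Nat.zero_lt_one hN
  -- F 0 0 > 0
  have hF00 : 0 < F 0 0 := by
    by_contra h
    push_neg at h
    have h1 : d * F 0 0 ≤ 0 := by nlinarith
    have h2 : Real.sqrt (d * F 0 0) = 0 := Real.sqrt_eq_zero'.2 h1
    rw [h2] at hc
    linarith
  -- c^2/(4d) < F 0 0
  have hc2 : c ^ 2 / (4 * d) < F 0 0 := by
    have hs : Real.sqrt (d * F 0 0) ^ 2 = d * F 0 0 := Real.sq_sqrt (by positivity)
    have h1 : c ^ 2 < 4 * (d * F 0 0) := by nlinarith [Real.sqrt_nonneg (d * F 0 0)]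
    rw [div_lt_iff₀ (by linarith)]
    nlinarith
  -- frequency
  set w := Real.sqrt ((F 0 0 - c ^ 2 / (4 * d)) / (d * N * 2)) with hwdef
  have hwpos : 0 < w := Real.sqrt_pos.2 (by
    apply div_pos (by linarith)
    positivity)
  set lam := c ^ 2 / (4 * d) + d * N * w ^ 2 with hlamdef
  have hlampos : 0 < lam := by
    have : 0 ≤ c ^ 2 / (4 * d) := by positivity
    have : 0 < d * N * w ^ 2 := by positivity
    rw [hlamdef]; linarith
  have hlamF : lam < F 0 0 := by
    have hw2 : w ^ 2 = (F 0 0 - c ^ 2 / (4 * d)) / (d * N * 2) := by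
      rw [hwdef]
      exact Real.sq_sqrt (div_nonneg (by linarith) (by positivity))
    rw [hlamdef, hw2]
    have h3 : d * N * ((F 0 0 - c ^ 2 / (4 * d)) / (d * N * 2))
        = (F 0 0 - c ^ 2 / (4 * d)) / 2 := by
      field_simp
    rw [h3]
    linarith
  set b := Real.pi / (2 * w) with hbdef
  have hbpos : 0 < b := by rw [hbdef]; positivity
  -- coefficients
  set aa : Fin N → ℝ := fun i => -(c / (2 * d)) * e i with haadef
  set φ : E N → ℝ := fun x => ∏ i, fexp (aa i) w (x i) with hφdef
  have hei : ∀ i, |e i| ≤ 1 := fun i => he ▸ abs_coord_le_norm e i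
  have haai : ∀ i, |aa i| ≤ c / (2 * d) := by
    intro i
    rw [haadef]
    simp only [abs_mul, abs_neg]
    rw [abs_of_nonneg (by positivity : (0:ℝ) ≤ c / (2*d))]
    calc c / (2*d) * |e i| ≤ c / (2*d) * 1 :=
      mul_le_mul_of_nonneg_left (hei i) (by positivity)
    _ = c / (2*d) := by ring
  set M := Real.exp (c / (2 * d) * b) ^ N with hMdef
  have hMpos : 0 < M := by rw [hMdef]; positivity
  have hφnonneg : ∀ y : E N, (∀ i, |y i| ≤ b) → 0 ≤ φ y := by
    intro y hy
    simp only [hφdef]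
    apply Finset.prod_nonneg
    intro i _
    exact fexp_nonneg (aa i) w (y i) hwpos (hbdef ▸ hy i)
  have hφleM : ∀ y : E N, (∀ i, |y i| ≤ b) → φ y ≤ M := by
    intro y hy
    simp only [hφdef, hMdef]
    have h1 : ∀ i ∈ Finset.univ (α := Fin N),
        fexp (aa i) w (y i) ≤ Real.exp (c / (2 * d) * b) := by
      intro i _
      apply fexp_le (aa i) w (y i) hwpos (hbdef ▸ hy i)
      rw [← hbdef]
      exact mul_le_mul_of_nonneg_right (haai i) hbpos.le
    calc ∏ i, fexp (aa i) w (y i)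
        ≤ ∏ _i : Fin N, Real.exp (c / (2 * d) * b) := by
          apply Finset.prod_le_prod
          · intro i _; exact fexp_nonneg (aa i) w (y i) hwpos (hbdef ▸ hy i)
          · exact h1
    _ = Real.exp (c / (2 * d) * b) ^ N := by
          rw [Finset.prod_const, Finset.card_univ, Fintype.card_fin]
  have hφpos : ∀ y : E N, (∀ i, |y i| < b) → 0 < φ y := by
    intro y hy
    simp only [hφdef]
    apply Finset.prod_pos
    intro i _
    exact fexp_pos_interior (aa i) w (y i) hwpos (hbdef ▸ hy i)
  have hφ0 : φ 0 = 1 := by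
    simp only [hφdef]
    have : ∀ i ∈ Finset.univ (α := Fin N), fexp (aa i) w ((0 : E N) i) = 1 := by
      intro i _
      have : (0 : E N) i = (0:ℝ) := rfl
      rw [this]
      unfold fexp
      simp
    rw [Finset.prod_congr rfl this]
    simp
  have hφzero : ∀ (y : E N) (j : Fin N), |y j| = b → φ y = 0 := by
    intro y j hyj
    simp only [hφdef]
    apply Finset.prod_eq_zero (Finset.mem_univ j)
    unfold fexp
    have hcos : Real.cos (w * y j) = 0 := by
      rcases abs_eq hbpos.le |>.1 hyj with h | h
      · rw [h, hbdef]
        have : w * (Real.pi / (2 * w)) = Real.pi / 2 := by field_simp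
        rw [this, Real.cos_pi_div_two]
      · rw [h, hbdef]
        have : w * -(Real.pi / (2 * w)) = -(Real.pi / 2) := by field_simp
        rw [this, Real.cos_neg, Real.cos_pi_div_two]
    rw [hcos, mul_zero]
  -- sum of squares of e
  have hsum : ∑ i, (e i) ^ 2 = 1 := by
    have h1 := EuclideanSpace.norm_eq e
    rw [he] at h1
    have hnn : 0 ≤ ∑ i, ‖e i‖ ^ 2 := by positivity
    have h2 : ∑ i, ‖e i‖ ^ 2 = 1 := Real.sqrt_eq_one.1 h1.symm
    simpa [Real.norm_eq_abs, sq_abs] using h2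
  -- master identity
  have hmaster : ∀ z : E N,
      ∑ i, (d * fexp2 (aa i) w (z i) + c * e i * fexp1 (aa i) w (z i)) *
        (∏ k ∈ Finset.univ.erase i, fexp (aa k) w (z k)) = -lam * φ z := by
    intro z
    have h1 : ∀ i ∈ Finset.univ (α := Fin N),
        (d * fexp2 (aa i) w (z i) + c * e i * fexp1 (aa i) w (z i)) *
          (∏ k ∈ Finset.univ.erase i, fexp (aa k) w (z k))
        = (-((c ^ 2 / (4 * d)) * (e i) ^ 2 + d * w ^ 2)) * φ z := by
      intro i _
      have hk := key_identity d c (e i) w (z i) hd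
      have haa : aa i = -(c / (2 * d)) * e i := by rw [haadef]
      rw [haa]
      rw [hk]
      have : fexp (-(c / (2 * d)) * e i) w (z i) *
          (∏ k ∈ Finset.univ.erase i, fexp (aa k) w (z k)) = φ z := by
        simp only [hφdef, ← haa]
        exact Finset.mul_prod_erase Finset.univ (fun k => fexp (aa k) w (z k))
          (Finset.mem_univ i)
      rw [mul_assoc, this]
    rw [Finset.sum_congr rfl h1, ← Finset.sum_mul]
    congr 1
    have h2 : ∑ i : Fin N, ((c ^ 2 / (4 * d)) * (e i) ^ 2 + d * w ^ 2) = lam := by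
      rw [Finset.sum_add_distrib, ← Finset.mul_sum, hsum, Finset.sum_const,
        Finset.card_univ, Fintype.card_fin, hlamdef]
      simp
      ring
    rw [← h2, ← Finset.sum_neg_distrib]

  -- p is strictly above its infimum everywhere
  have hpm : ∀ x : E N, m < p x := by
    intro x0
    rcases (hmle x0).lt_or_eq with h | h
    · exact h
    exfalso
    have hmin : IsLocalMin p x0 := Filter.Eventually.of_forall (fun y => h ▸ hmle y)
    have hm0' : 0 < m := h ▸ hpos x0
    have hde : fderiv ℝ p x0 e = 0 := by
      rw [hmin.fderiv_eq_zero]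
      simp
    have hlap : 0 ≤ lap p x0 := by
      have : lap p x0 = ∑ i : Fin N,
          fderiv ℝ (fun y : E N => fderiv ℝ p y (EuclideanSpace.single i (1 : ℝ))) x0
            (EuclideanSpace.single i (1 : ℝ)) := rfl
      rw [this]
      apply Finset.sum_nonneg
      intro i _
      set v := EuclideanSpace.single i (1:ℝ) with hvdef
      have hqmin : IsLocalMin (fun t : ℝ => p (x0 + t • v)) 0 :=
        Filter.Eventually.of_forall (fun t => by
          show p (x0 + (0:ℝ) • v) ≤ p (x0 + t • v)
          simp only [zero_smul, add_zero]
          rw [← h]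
          exact hmle _)
      have hq1 : HasDerivAt (fun t : ℝ => fderiv ℝ p (x0 + t • v) v)
          (fderiv ℝ (fun y : E N => fderiv ℝ p y v) x0 v) 0 := p_line2 p hp x0 v
      exact (oneD_min _ _ _ (fun t => p_line p hdiffp x0 v t) hq1 hqmin).2
    have hFm : 0 < F m 0 := hF.pos m hm0'.le hmlt1
    have := heq x0
    rw [hde, ← h] at this
    nlinarith

  -- continuity of u ↦ F u 0 on [0, ∞)
  have hFcont : ContinuousOn (fun u : ℝ => F u 0) (Ici 0) := by
    have h1 : ContinuousOn (Function.uncurry F) (Ici 0 ×ˢ Ici 0) := hF.smooth.continuousOn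
    have h2 : ContinuousOn (fun u : ℝ => ((u, (0:ℝ)) : ℝ × ℝ)) (Ici 0) :=
      (continuous_id.prodMk continuous_const).continuousOn
    exact h1.comp h2 (fun u hu => ⟨hu, self_mem_Ici⟩)
  -- the threshold θ
  obtain ⟨θ, hθm, hθ1, hθH⟩ : ∃ θ : ℝ, m < θ ∧ θ ≤ 1 ∧
      ∀ s : ℝ, m < s → s ≤ θ → lam * (s - m) < s * F s 0 := by
    rcases hm0.eq_or_lt with hm0e | hm0p
    · -- m = 0
      have hcw : ContinuousWithinAt (fun u : ℝ => F u 0) (Ici 0) 0 := hFcont 0 self_mem_Ici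
      have hev : ∀ᶠ u in 𝓝[Ici 0] (0:ℝ), lam < F u 0 :=
        hcw.eventually_mem (Ioi_mem_nhds hlamF)
      rcases Metric.mem_nhdsWithin_iff.1 hev with ⟨δ, hδ, hδ'⟩
      refine ⟨min (δ/2) 1, ?_, min_le_right _ _, ?_⟩
      · rw [← hm0e]; positivity
      · intro s hs1 hs2
        rw [← hm0e] at hs1
        have hsδ : s < δ := by
          have h5 : s ≤ δ/2 := le_trans hs2 (min_le_left _ _)
          linarith
        have hmem : s ∈ Metric.ball (0:ℝ) δ ∩ Ici 0 := by
          constructor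
          · rw [Metric.mem_ball, Real.dist_eq, sub_zero, abs_of_pos hs1]; exact hsδ
          · exact le_of_lt hs1
        have hFs : lam < F s 0 := hδ' hmem
        rw [← hm0e]
        have : lam * s < F s 0 * s := mul_lt_mul_of_pos_right hFs hs1
        nlinarith
    · -- m > 0
      have hG : ContinuousWithinAt (fun s : ℝ => s * F s 0 - lam * (s - m)) (Ici 0) m := by
        apply ContinuousWithinAt.sub
        · exact (continuousWithinAt_id.mul (hFcont m (le_of_lt hm0p)))
        · exact (continuous_const.mul (continuous_id.sub continuous_const)).continuousWithinAt
      have hGm : 0 < m * F m 0 - lam * (m - m) := by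
        have : 0 < F m 0 := hF.pos m hm0p.le hmlt1
        have h4 : 0 < m * F m 0 := mul_pos hm0p this
        simp only [sub_self, mul_zero]
        linarith
      have hev : (fun s : ℝ => s * F s 0 - lam * (s - m)) ⁻¹' (Ioi 0) ∈ 𝓝[Ici 0] m :=
        hG (Ioi_mem_nhds hGm)
      rcases Metric.mem_nhdsWithin_iff.1 hev with ⟨δ, hδ, hδ'⟩
      refine ⟨min (m + δ/2) 1, lt_min (by linarith) hmlt1, min_le_right _ _, ?_⟩
      intro s hs1 hs2
      have hsδ : s < m + δ := by
        have h5 : s ≤ m + δ/2 := le_trans hs2 (min_le_left _ _)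
        linarith
      have hmem : s ∈ Metric.ball m δ ∩ Ici 0 := by
        constructor
        · rw [Metric.mem_ball, Real.dist_eq, abs_of_pos (by linarith : 0 < s - m)]; linarith
        · exact le_of_lt (lt_trans hm0p hs1)
      have h6 := hδ' hmem
      simp only [Set.mem_preimage, Set.mem_Ioi] at h6
      linarith

  -- step C: sliding comparison on boxes
  set ε₀ := (θ - m) / M with hε₀def
  have hε₀pos : 0 < ε₀ := div_pos (by linarith) hMpos
  have hkey : ∀ x₀ : E N, m + ε₀ ≤ p x₀ := by
    intro x₀
    set Q : Set (E N) := {x : E N | ∀ i, |x i - x₀ i| ≤ b} with hQdef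
    have hQc : IsCompact Q := box_compact x₀ b hbpos.le
    have hx₀Q : x₀ ∈ Q := by
      intro i
      simp only [sub_self, abs_zero]
      exact hbpos.le
    have hQco : ∀ x ∈ Q, ∀ i, |(x - x₀) i| ≤ b := by
      intro x hx i
      exact hx i
    set A := {ε : ℝ | ε ∈ Icc 0 ε₀ ∧ ∀ x ∈ Q, m + ε * φ (x - x₀) ≤ p x} with hAdef
    have h0A : (0:ℝ) ∈ A := by
      refine ⟨⟨le_rfl, hε₀pos.le⟩, fun x hx => ?_⟩
      rw [zero_mul, add_zero]
      exact (hpm x).le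
    have hbddA : BddAbove A := ⟨ε₀, fun ε hε => hε.1.2⟩
    set ε₁ := sSup A with hε₁def
    have hε₁0 : 0 ≤ ε₁ := le_csSup hbddA h0A
    have hε₁ε₀ : ε₁ ≤ ε₀ := csSup_le ⟨0, h0A⟩ (fun ε hε => hε.1.2)
    have hε₁A : ∀ x ∈ Q, m + ε₁ * φ (x - x₀) ≤ p x := by
      intro x hx
      rcases (hφnonneg (x - x₀) (hQco x hx)).eq_or_lt with hz | hz
      · rw [← hz, mul_zero, add_zero]
        exact (hpm x).le
      · have hub : ∀ ε ∈ A, ε ≤ (p x - m) / φ (x - x₀) := by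
          intro ε hε
          rw [le_div_iff₀ hz]
          have := hε.2 x hx
          linarith
        have h1 : ε₁ ≤ (p x - m) / φ (x - x₀) := csSup_le ⟨0, h0A⟩ hub
        have h2 : ε₁ * φ (x - x₀) ≤ p x - m := (le_div_iff₀ hz).1 h1
        linarith
    have hε₁eq : ε₁ = ε₀ := by
      rcases hε₁ε₀.lt_or_eq with hlt | heq'
      swap
      · exact heq'
      exfalso
      set h : E N → ℝ := fun x => p x - (m + ε₁ * φ (x - x₀)) with hhdef
      have hcont : Continuous h := by
        apply (hp.continuous).sub
        apply continuous_const.add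
        apply continuous_const.mul
        exact (cont_phi aa w).comp (continuous_id.sub continuous_const)
      obtain ⟨xs, hxsQ, hxsmin⟩ := hQc.exists_isMinOn ⟨x₀, hx₀Q⟩ hcont.continuousOn
      have hxsmin' : ∀ x ∈ Q, h xs ≤ h x := fun x hx => (isMinOn_iff.1 hxsmin) x hx
      have hh0 : ∀ x ∈ Q, 0 ≤ h x := by
        intro x hx
        have := hε₁A x hx
        simp only [hhdef]
        linarith
      rcases (hh0 xs hxsQ).lt_or_eq with hσpos | hσ0
      · -- the minimum is positive : we can slide further, contradiction with sup
        set ε' := min ε₀ (ε₁ + h xs / M) with hε'def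
        have hε'A : ε' ∈ A := by
          refine ⟨⟨?_, min_le_left _ _⟩, ?_⟩
          · exact le_min hε₀pos.le (add_nonneg hε₁0 (div_nonneg hσpos.le hMpos.le))
          · intro x hx
            have hφb : φ (x - x₀) ≤ M := hφleM _ (hQco x hx)
            have hφnn : 0 ≤ φ (x - x₀) := hφnonneg _ (hQco x hx)
            have h1 : ε' * φ (x - x₀) ≤ (ε₁ + h xs / M) * φ (x - x₀) :=
              mul_le_mul_of_nonneg_right (min_le_right _ _) hφnn
            have h1' : (ε₁ + h xs / M) * φ (x - x₀)
                = ε₁ * φ (x - x₀) + (h xs / M) * φ (x - x₀) := by ring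
            have h2 : (h xs / M) * φ (x - x₀) ≤ (h xs / M) * M :=
              mul_le_mul_of_nonneg_left hφb (div_nonneg hσpos.le hMpos.le)
            have h3 : (h xs / M) * M = h xs := div_mul_cancel₀ _ (ne_of_gt hMpos)
            have h4 : h xs ≤ h x := hxsmin' x hx
            have h5 : h x = p x - (m + ε₁ * φ (x - x₀)) := by rw [hhdef]
            calc m + ε' * φ (x - x₀)
                ≤ m + (ε₁ * φ (x - x₀) + h xs / M * φ (x - x₀)) := by
                  rw [← h1']; linarith [h1]
            _ ≤ m + (ε₁ * φ (x - x₀) + h xs) := by linarith [h2, h3]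
            _ ≤ m + (ε₁ * φ (x - x₀) + h x) := by linarith [h4]
            _ = p x := by rw [h5]; ring
        have h6 : ε' ≤ ε₁ := le_csSup hbddA hε'A
        have h7 : ε₁ < ε' := lt_min hlt (by linarith [div_pos hσpos hMpos])
        linarith
      · -- touching point
        set z := xs - x₀ with hzdef
        have hps : p xs = m + ε₁ * φ z := by
          have h1 : h xs = 0 := hσ0.symm
          simp only [hhdef] at h1
          linarith
        have hφznn : 0 ≤ φ z := hφnonneg z (hQco xs hxsQ)
        have hprod_pos : 0 < ε₁ * φ z := by
          have := hpm xs
          linarith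
        have hφs : 0 < φ z := by
          rcases hφznn.eq_or_lt with h' | h'
          · rw [← h', mul_zero] at hprod_pos; linarith
          · exact h'
        have hε₁pos : 0 < ε₁ := by
          rcases hε₁0.eq_or_lt with h' | h'
          · rw [← h', zero_mul] at hprod_pos; linarith
          · exact h'
        -- xs is interior to the box
        have hint : ∀ i, |z i| < b := by
          intro i
          rcases (hQco xs hxsQ i).lt_or_eq with h' | h'
          · exact h'
          · exact absurd (hφzero z i h') (ne_of_gt hφs)
        set δ := Finset.univ.inf' (Finset.univ_nonempty) (fun i => b - |z i|) with hδdef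
        have hδpos : 0 < δ := by
          rw [hδdef, Finset.lt_inf'_iff]
          intro i _
          linarith [hint i]
        have hball : Metric.ball xs δ ⊆ Q := by
          intro y hy i
          have h1 : |(y - xs) i| ≤ ‖y - xs‖ := abs_coord_le_norm (y - xs) i
          have h1' : (y - xs) i = y i - xs i := rfl
          rw [h1'] at h1
          have h2 : ‖y - xs‖ < δ := by rwa [Metric.mem_ball, dist_eq_norm] at hy
          have h3 : δ ≤ b - |z i| := by
            rw [hδdef]
            exact Finset.inf'_le _ (Finset.mem_univ i)
          have h4 : z i = xs i - x₀ i := rfl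
          rw [h4] at h3
          calc |y i - x₀ i|
              ≤ |y i - xs i| + |xs i - x₀ i| := abs_sub_le _ _ _
          _ ≤ δ + |xs i - x₀ i| := by linarith
          _ ≤ b := by linarith
        have hloc : IsLocalMin h xs := by
          have hQnb : Q ∈ 𝓝 xs := Filter.mem_of_superset (Metric.ball_mem_nhds xs hδpos) hball
          exact Filter.eventually_of_mem hQnb (fun y hy => hxsmin' y hy)
        have hvec : ∀ (t : ℝ) (v : E N), xs + t • v - x₀ = z + t • v := by
          intro t v
          rw [hzdef]
          abel
        have hlinemin : ∀ v : E N, IsLocalMin (fun t : ℝ => h (xs + t • v)) 0 := by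
          intro v
          have hcl : Continuous (fun t : ℝ => xs + t • v) :=
            continuous_const.add (continuous_id.smul continuous_const)
          have ht : Tendsto (fun t : ℝ => xs + t • v) (𝓝 0) (𝓝 xs) := by
            have h0 : xs + (0:ℝ) • v = xs := by simp
            have := hcl.tendsto 0
            rwa [h0] at this
          have hev := ht.eventually hloc
          refine hev.mono (fun t ht' => ?_)
          simpa using ht'
        -- second-order information in each coordinate direction
        have hlapterm : ∀ i : Fin N,
            ε₁ * (fexp2 (aa i) w (z i) * (∏ k ∈ Finset.univ.erase i, fexp (aa k) w (z k)))
              ≤ fderiv ℝ (fun y : E N => fderiv ℝ p y (EuclideanSpace.single i (1:ℝ))) xs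
                  (EuclideanSpace.single i (1:ℝ)) := by
          intro i
          have hq : ∀ t : ℝ, HasDerivAt
              (fun t : ℝ => p (xs + t • EuclideanSpace.single i (1:ℝ)) -
                (m + ε₁ * (fexp (aa i) w (z i + t) *
                  (∏ k ∈ Finset.univ.erase i, fexp (aa k) w (z k)))))
              (fderiv ℝ p (xs + t • EuclideanSpace.single i (1:ℝ)) (EuclideanSpace.single i (1:ℝ)) -
                ε₁ * (fexp1 (aa i) w (z i + t) *
                  (∏ k ∈ Finset.univ.erase i, fexp (aa k) w (z k)))) t := by
            intro t
            exact (p_line p hdiffp xs _ t).sub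
              (((shift_deriv1 (aa i) w (z i) _ t).const_mul ε₁).const_add m)
          have hq1d : HasDerivAt
              (fun t : ℝ => fderiv ℝ p (xs + t • EuclideanSpace.single i (1:ℝ))
                  (EuclideanSpace.single i (1:ℝ)) -
                ε₁ * (fexp1 (aa i) w (z i + t) *
                  (∏ k ∈ Finset.univ.erase i, fexp (aa k) w (z k))))
              (fderiv ℝ (fun y : E N => fderiv ℝ p y (EuclideanSpace.single i (1:ℝ))) xs
                  (EuclideanSpace.single i (1:ℝ)) -
                ε₁ * (fexp2 (aa i) w (z i) *
                  (∏ k ∈ Finset.univ.erase i, fexp (aa k) w (z k)))) 0 := by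
            have h1 := p_line2 p hp xs (EuclideanSpace.single i (1:ℝ))
            have h2 := (shift_deriv2 (aa i) w (z i)
              (∏ k ∈ Finset.univ.erase i, fexp (aa k) w (z k)) 0).const_mul ε₁
            have h3 := h1.sub h2
            simpa [Pi.sub_def] using h3
          have hqmin : IsLocalMin
              (fun t : ℝ => p (xs + t • EuclideanSpace.single i (1:ℝ)) -
                (m + ε₁ * (fexp (aa i) w (z i + t) *
                  (∏ k ∈ Finset.univ.erase i, fexp (aa k) w (z k))))) 0 := by
            have hfun : (fun t : ℝ => h (xs + t • EuclideanSpace.single i (1:ℝ)))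
                = (fun t : ℝ => p (xs + t • EuclideanSpace.single i (1:ℝ)) -
                  (m + ε₁ * (fexp (aa i) w (z i + t) *
                    (∏ k ∈ Finset.univ.erase i, fexp (aa k) w (z k))))) := by
              funext t
              simp only [hhdef]
              rw [hvec t (EuclideanSpace.single i (1:ℝ))]
              simp only [hφdef]
              rw [prod_single_eq aa w z i t]
            rw [← hfun]
            exact hlinemin (EuclideanSpace.single i (1:ℝ))
          obtain ⟨-, hge⟩ := oneD_min _ _ _ hq hq1d hqmin
          linarith
        -- first-order information in the direction e
        have hde : fderiv ℝ p xs e =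
            ε₁ * ∑ i, (∏ k ∈ Finset.univ.erase i, fexp (aa k) w (z k)) *
              (e i * fexp1 (aa i) w (z i)) := by
          have hq0 : HasDerivAt
              (fun t : ℝ => p (xs + t • e) -
                (m + ε₁ * ∏ i, fexp (aa i) w (z i + t * e i)))
              (fderiv ℝ p (xs + (0:ℝ) • e) e -
                ε₁ * ∑ i, (∏ k ∈ Finset.univ.erase i, fexp (aa k) w (z k + 0 * e k)) *
                  (e i * fexp1 (aa i) w (z i + 0 * e i))) 0 :=
            (p_line p hdiffp xs e 0).sub
              (((prod_line aa w z e 0).const_mul ε₁).const_add m)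
          have hqmin : IsLocalMin
              (fun t : ℝ => p (xs + t • e) -
                (m + ε₁ * ∏ i, fexp (aa i) w (z i + t * e i))) 0 := by
            have hfun : (fun t : ℝ => h (xs + t • e))
                = (fun t : ℝ => p (xs + t • e) -
                  (m + ε₁ * ∏ i, fexp (aa i) w (z i + t * e i))) := by
              funext t
              simp only [hhdef]
              rw [hvec t e]
              rfl
            rw [← hfun]
            exact hlinemin e
          have h0 := hqmin.hasDerivAt_eq_zero hq0
          have h1 : xs + (0:ℝ) • e = xs := by simp
          rw [h1] at h0
          simp only [zero_mul, add_zero] at h0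
          linarith [h0]
        -- assemble
        have hs1 : m < p xs := hpm xs
        have hφleM' : φ z ≤ M := hφleM z (hQco xs hxsQ)
        have hs2 : p xs ≤ θ := by
          have h1 : ε₁ * φ z ≤ ε₀ * M := mul_le_mul hlt.le hφleM' hφznn hε₀pos.le
          have h2 : ε₀ * M = θ - m := by
            rw [hε₀def]
            field_simp
          linarith [hps]
        have hH := hθH (p xs) hs1 hs2
        have hlapge : ε₁ * ∑ i, fexp2 (aa i) w (z i) *
            (∏ k ∈ Finset.univ.erase i, fexp (aa k) w (z k)) ≤ lap p xs := by
          have hld : lap p xs = ∑ i : Fin N,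
              fderiv ℝ (fun y : E N => fderiv ℝ p y (EuclideanSpace.single i (1 : ℝ))) xs
                (EuclideanSpace.single i (1 : ℝ)) := rfl
          rw [hld, Finset.mul_sum]
          apply Finset.sum_le_sum
          intro i _
          exact hlapterm i
        have hT : ∑ i, (d * fexp2 (aa i) w (z i) + c * e i * fexp1 (aa i) w (z i)) *
            (∏ k ∈ Finset.univ.erase i, fexp (aa k) w (z k))
            = d * (∑ i, fexp2 (aa i) w (z i) *
                (∏ k ∈ Finset.univ.erase i, fexp (aa k) w (z k)))
              + c * (∑ i, (∏ k ∈ Finset.univ.erase i, fexp (aa k) w (z k)) *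
                (e i * fexp1 (aa i) w (z i))) := by
          rw [Finset.mul_sum, Finset.mul_sum, ← Finset.sum_add_distrib]
          apply Finset.sum_congr rfl
          intro i _
          ring
        have hmast := hmaster z
        have heqs := heq xs
        have e3 : d * (ε₁ * ∑ i, fexp2 (aa i) w (z i) *
            (∏ k ∈ Finset.univ.erase i, fexp (aa k) w (z k))) ≤ d * lap p xs :=
          mul_le_mul_of_nonneg_left hlapge hd.le
        have e4 : d * (ε₁ * ∑ i, fexp2 (aa i) w (z i) *
              (∏ k ∈ Finset.univ.erase i, fexp (aa k) w (z k)))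
            + c * (ε₁ * ∑ i, (∏ k ∈ Finset.univ.erase i, fexp (aa k) w (z k)) *
              (e i * fexp1 (aa i) w (z i)))
            = ε₁ * (-lam * φ z) := by
          rw [← hmast, hT]
          ring
        have e5 : ε₁ * φ z = p xs - m := by linarith [hps]
        have e6 : ε₁ * (-lam * φ z) = -(lam * (p xs - m)) := by
          rw [← e5]
          ring
        have e2 : c * fderiv ℝ p xs e = c * (ε₁ * ∑ i,
            (∏ k ∈ Finset.univ.erase i, fexp (aa k) w (z k)) *
              (e i * fexp1 (aa i) w (z i))) := by rw [hde]
        linarith [heqs, e2, e3, e4, e6, hH]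
    -- conclusion of hkey
    have h8 := hε₁A x₀ hx₀Q
    rw [sub_self, hφ0] at h8
    rw [hε₁eq] at h8
    linarith
  -- final contradiction
  have h9 : m + ε₀ ≤ sInf (Set.range p) := by
    refine le_csInf ⟨p x₁, x₁, rfl⟩ ?_
    rintro y ⟨x, rfl⟩
    exact hkey x
  rw [← hmdef] at h9
  linarith
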